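/- Let T = T_q(2) be the quotient of K⟨a11, a12, a22⟩ by the relations a22·a12 = q·a12·a22, a11·a12 = q·a12·a11, a11·a22 = a22·a11. For each λ ∈ K* and each invertible matrix A = (μ_{ij}) ∈ GL₂(K), there is an algebra automorphism φ_{λ,A} of T with φ_{λ,A}(a12) = λ·a12, φ_{λ,A}(a11) = μ11·a11 + μ21·a22, φ_{λ,A}(a22) = μ12·a11 + μ22·a22, and the map (λ, A) ↦ φ_{λ,A} is an injective group homomorphism from K* × GL₂(K) into Aut(T). -/

import Mathlib

/-- The defining relations of `T_q(2)`: generator `0` is `a11`, `1` is `a12`, `2` is `a22`. -/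
inductive Tq2Rel (K : Type*) [Field K] (q : K) :
    FreeAlgebra K (Fin 3) → FreeAlgebra K (Fin 3) → Prop
  | r1 : Tq2Rel K q (FreeAlgebra.ι K 2 * FreeAlgebra.ι K 1)
      (q • (FreeAlgebra.ι K 1 * FreeAlgebra.ι K 2))
  | r2 : Tq2Rel K q (FreeAlgebra.ι K 0 * FreeAlgebra.ι K 1)
      (q • (FreeAlgebra.ι K 1 * FreeAlgebra.ι K 0))
  | r3 : Tq2Rel K q (FreeAlgebra.ι K 0 * FreeAlgebra.ι K 2)
      (FreeAlgebra.ι K 2 * FreeAlgebra.ι K 0)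

/-- The quantum upper triangular matrix algebra `T_q(2)`. -/
abbrev Tq2 (K : Type*) [Field K] (q : K) := RingQuot (Tq2Rel K q)

/-- The generators `a11`, `a12`, `a22` of `T_q(2)` (indexed by `0`, `1`, `2`). -/
def Tq2.a (K : Type*) [Field K] (q : K) (i : Fin 3) : Tq2 K q :=
  RingQuot.mkAlgHom K (Tq2Rel K q) (FreeAlgebra.ι K i)

namespace Stmt17

variable {K : Type*} [Field K] {q : K}

lemma rel1 : Tq2.a K q 2 * Tq2.a K q 1 = q • (Tq2.a K q 1 * Tq2.a K q 2) := by
  simpa [Tq2.a, map_mul, map_smul] using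
    RingQuot.mkAlgHom_rel K (Tq2Rel.r1 (K := K) (q := q))

lemma rel2 : Tq2.a K q 0 * Tq2.a K q 1 = q • (Tq2.a K q 1 * Tq2.a K q 0) := by
  simpa [Tq2.a, map_mul, map_smul] using
    RingQuot.mkAlgHom_rel K (Tq2Rel.r2 (K := K) (q := q))

lemma rel3 : Tq2.a K q 0 * Tq2.a K q 2 = Tq2.a K q 2 * Tq2.a K q 0 := by
  simpa [Tq2.a, map_mul] using
    RingQuot.mkAlgHom_rel K (Tq2Rel.r3 (K := K) (q := q))

/-- target images -/
noncomputable def tgt (lam : K) (A : Matrix (Fin 2) (Fin 2) K) : Fin 3 → Tq2 K q :=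
  ![A 0 0 • Tq2.a K q 0 + A 1 0 • Tq2.a K q 2,
    lam • Tq2.a K q 1,
    A 0 1 • Tq2.a K q 0 + A 1 1 • Tq2.a K q 2]

noncomputable def φAux (lam : K) (A : Matrix (Fin 2) (Fin 2) K) :
    Tq2 K q →ₐ[K] Tq2 K q :=
  RingQuot.liftAlgHom K ⟨FreeAlgebra.lift K (tgt lam A), by
    intro x y h
    induction h with
    | r1 =>
        simp only [map_mul, map_smul, FreeAlgebra.lift_ι_apply, tgt,
          Matrix.cons_val_zero, Matrix.cons_val_one, Matrix.head_cons,
          Matrix.cons_val_two, Matrix.tail_cons]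
        simp only [mul_add, add_mul, smul_mul_assoc, mul_smul_comm, smul_add,
          rel1 (q := q), rel2 (q := q), smul_smul]
        module
    | r2 =>
        simp only [map_mul, map_smul, FreeAlgebra.lift_ι_apply, tgt,
          Matrix.cons_val_zero, Matrix.cons_val_one, Matrix.head_cons,
          Matrix.cons_val_two, Matrix.tail_cons]
        simp only [mul_add, add_mul, smul_mul_assoc, mul_smul_comm, smul_add,
          rel1 (q := q), rel2 (q := q), smul_smul]
        module
    | r3 =>
        simp only [map_mul, FreeAlgebra.lift_ι_apply, tgt,
          Matrix.cons_val_zero, Matrix.cons_val_one, Matrix.head_cons,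
          Matrix.cons_val_two, Matrix.tail_cons]
        simp only [mul_add, add_mul, smul_mul_assoc, mul_smul_comm, smul_smul,
          rel3 (q := q)]
        module⟩

@[simp] lemma φAux_a (lam : K) (A : Matrix (Fin 2) (Fin 2) K) (i : Fin 3) :
    φAux (q := q) lam A (Tq2.a K q i) = tgt lam A i := by
  simp [φAux, Tq2.a, RingQuot.liftAlgHom_mkAlgHom_apply, FreeAlgebra.lift_ι_apply]

end Stmt17

section Part2
variable {K : Type*} [Field K] {q : K}
open Stmt17

noncomputable def Ψ : Kˣ × GL (Fin 2) K →* (Tq2 K q →ₐ[K] Tq2 K q) where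
  toFun p := φAux (q := q) (p.1 : K) (p.2 : Matrix (Fin 2) (Fin 2) K)
  map_one' := by
    ext i
    show φAux _ _ (Tq2.a K q i) = AlgHom.id K _ (Tq2.a K q i)
    fin_cases i <;>
      simp [φAux_a, tgt, Matrix.one_apply]
  map_mul' p r := by
    ext i
    show φAux _ _ (Tq2.a K q i) = (φAux _ _).comp (φAux _ _) (Tq2.a K q i)
    fin_cases i <;>
      simp [φAux_a, tgt, Units.val_mul, Matrix.mul_apply, Fin.sum_univ_two,
        smul_add, smul_smul, add_smul, mul_comm] <;> abel

end Part2

section Part3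
variable {K : Type*} [Field K] {q : K}
open Stmt17

/-- separating map killing a12 -/
noncomputable def sep1 : Tq2 K q →ₐ[K] MvPolynomial (Fin 2) K :=
  RingQuot.liftAlgHom K ⟨FreeAlgebra.lift K ![MvPolynomial.X 0, 0, MvPolynomial.X 1], by
    intro x y h
    induction h <;>
      simp [FreeAlgebra.lift_ι_apply, mul_comm]⟩

@[simp] lemma sep1_a (i : Fin 3) :
    sep1 (q := q) (Tq2.a K q i) = ![MvPolynomial.X 0, 0, MvPolynomial.X 1] i := by
  simp [sep1, Tq2.a, RingQuot.liftAlgHom_mkAlgHom_apply, FreeAlgebra.lift_ι_apply]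

/-- separating map keeping only a12 -/
noncomputable def sep2 : Tq2 K q →ₐ[K] Polynomial K :=
  RingQuot.liftAlgHom K ⟨FreeAlgebra.lift K ![0, Polynomial.X, 0], by
    intro x y h
    induction h <;>
      simp [FreeAlgebra.lift_ι_apply]⟩

@[simp] lemma sep2_a (i : Fin 3) :
    sep2 (q := q) (Tq2.a K q i) = ![0, Polynomial.X, 0] i := by
  simp [sep2, Tq2.a, RingQuot.liftAlgHom_mkAlgHom_apply, FreeAlgebra.lift_ι_apply]

lemma coeff_eq {a b c d : K}
    (h : a • Tq2.a K q 0 + b • Tq2.a K q 2 = c • Tq2.a K q 0 + d • Tq2.a K q 2) :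
    a = c ∧ b = d := by
  have h1 := congrArg (sep1 (q := q)) h
  simp only [map_add, map_smul, sep1_a, Matrix.cons_val_zero, Matrix.cons_val_two,
    Matrix.tail_cons, Matrix.head_cons] at h1
  constructor
  · have := congrArg (MvPolynomial.eval (Pi.single 0 1)) h1
    simpa [MvPolynomial.smul_eq_C_mul] using this
  · have := congrArg (MvPolynomial.eval (Pi.single 1 1)) h1
    simpa [MvPolynomial.smul_eq_C_mul] using this

lemma lam_eq {a b : K} (h : a • Tq2.a K q 1 = b • Tq2.a K q 1) : a = b := by
  have h1 := congrArg (sep2 (q := q)) h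
  simp only [map_smul, sep2_a, Matrix.cons_val_one, Matrix.head_cons, Matrix.cons_val_zero] at h1
  have h2 : (a - b) • (Polynomial.X : Polynomial K) = 0 := by
    rw [sub_smul, h1, sub_self]
  rcases smul_eq_zero.mp h2 with h3 | h3
  · exact sub_eq_zero.mp h3
  · exact absurd h3 Polynomial.X_ne_zero

end Part3

section Part4
variable {K : Type*} [Field K] {q : K}
open Stmt17

noncomputable def Φbig : Kˣ × GL (Fin 2) K →* (Tq2 K q ≃ₐ[K] Tq2 K q) :=
  (AlgEquiv.algHomUnitsEquiv K (Tq2 K q)).toMonoidHom.comp (Ψ (q := q)).toHomUnits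

lemma Φbig_apply (p : Kˣ × GL (Fin 2) K) (x : Tq2 K q) :
    Φbig p x = Stmt17.φAux (q := q) (p.1 : K) (p.2 : Matrix (Fin 2) (Fin 2) K) x := rfl

end Part4

theorem stmt_17 (K : Type*) [Field K] (q : K) (hq : q ≠ 0) :
    ∃ Φ : Kˣ × GL (Fin 2) K →* (Tq2 K q ≃ₐ[K] Tq2 K q),
      Function.Injective Φ ∧
      ∀ (lam : Kˣ) (A : GL (Fin 2) K),
        Φ (lam, A) (Tq2.a K q 1) = (lam : K) • Tq2.a K q 1 ∧
        Φ (lam, A) (Tq2.a K q 0) =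
          ((A : Matrix (Fin 2) (Fin 2) K) 0 0) • Tq2.a K q 0
            + ((A : Matrix (Fin 2) (Fin 2) K) 1 0) • Tq2.a K q 2 ∧
        Φ (lam, A) (Tq2.a K q 2) =
          ((A : Matrix (Fin 2) (Fin 2) K) 0 1) • Tq2.a K q 0
            + ((A : Matrix (Fin 2) (Fin 2) K) 1 1) • Tq2.a K q 2 := by
  classical
  refine ⟨Φbig (q := q), ?_, ?_⟩
  · intro p r h
    have key : ∀ i, Stmt17.φAux (q := q) (p.1 : K) (p.2 : Matrix (Fin 2) (Fin 2) K) (Tq2.a K q i)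
        = Stmt17.φAux (q := q) (r.1 : K) (r.2 : Matrix (Fin 2) (Fin 2) K) (Tq2.a K q i) := by
      intro i
      have := congrArg (fun e : Tq2 K q ≃ₐ[K] Tq2 K q => e (Tq2.a K q i)) h
      simpa [Φbig_apply] using this
    have h0 := key 0
    have h1 := key 1
    have h2 := key 2
    simp only [Stmt17.φAux_a, Stmt17.tgt, Matrix.cons_val_zero, Matrix.cons_val_one,
      Matrix.head_cons, Matrix.cons_val_two, Matrix.tail_cons] at h0 h1 h2
    obtain ⟨e00, e10⟩ := coeff_eq (q := q) h0
    obtain ⟨e01, e11⟩ := coeff_eq (q := q) h2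
    have el := lam_eq (q := q) h1
    refine Prod.ext (Units.ext el) (Units.ext (Matrix.ext fun i j => ?_))
    fin_cases i <;> fin_cases j <;> assumption
  · intro lam A
    refine ⟨?_, ?_, ?_⟩ <;>
      simp [Φbig_apply, Stmt17.φAux_a, Stmt17.tgt]
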